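/- Let C be a small category and U a subterminal presheaf on C. For a presheaf X, write O(X) = X^U for its U-modal reflection (with unit the canonical map X ⟶ X^U) and write Cl(X) for its U-connected reflection, the pushout of X ⟵ X × U ⟶ U (with unit the coprojection X ⟶ Cl(X)). Then for every presheaf X, the commuting square with vertices X, Cl(X), O(X), Cl(O(X)) — whose sides are the unit X ⟶ Cl(X), the unit X ⟶ O(X), the unit O(X) ⟶ Cl(O(X)), and Cl applied to the unit X ⟶ O(X), i.e., Cl(X) ⟶ Cl(O(X)) — is a pullback square. -/

import Mathlib

open CategoryTheory CategoryTheory.Limits MonoidalCategory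

universe u

variable {C : Type u} [SmallCategory C]

/-- The `U`-modal reflection `O(X) = X^U`. -/
noncomputable def modalReflection (U X : Cᵒᵖ ⥤ Type u) : Cᵒᵖ ⥤ Type u :=
  (ihom U).obj X

/-- The unit `X ⟶ O(X) = X^U`: the currying of the (first) projection
`X × U ⟶ X`. -/
noncomputable def modalUnit (U X : Cᵒᵖ ⥤ Type u) : X ⟶ modalReflection U X :=
  MonoidalClosed.curry (CartesianMonoidalCategory.snd U X)

/-- The `U`-connected reflection functor `Cl : Psh(C) ⥤ Psh(C)`, sending a presheaf
`X` to the pushout of the span `X ⟵ X × U ⟶ U` formed by the two product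
projections, and acting on morphisms by functoriality of pushouts. -/
noncomputable def connReflectionFunctor (U : Cᵒᵖ ⥤ Type u) :
    (Cᵒᵖ ⥤ Type u) ⥤ Cᵒᵖ ⥤ Type u where
  obj X := pushout (CartesianMonoidalCategory.fst X U) (CartesianMonoidalCategory.snd X U)
  map {X Y} f :=
    pushout.map _ _ _ _ f (𝟙 U) (f ⊗ₘ 𝟙 U) (by simp) (by simp)
  map_id X := by
    apply pushout.hom_ext <;> simp
  map_comp {X Y Z} f g := by
    rw [pushout.map_comp]
    congr 1

/-- The unit `X ⟶ Cl(X)` of the `U`-connected reflection: the coprojection into the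
pushout. -/
noncomputable def connUnit (U X : Cᵒᵖ ⥤ Type u) :
    X ⟶ (connReflectionFunctor U).obj X :=
  pushout.inl (CartesianMonoidalCategory.fst X U) (CartesianMonoidalCategory.snd X U)

/-! ### Auxiliary lemmas -/

section Aux

open CartesianMonoidalCategory

/-- If there is a morphism into a subterminal presheaf `U` from `A`, then the second
projection `U ⊗ A ⟶ A` is an isomorphism. -/
lemma isIso_snd_of_hom {U A : Cᵒᵖ ⥤ Type u} (hU : IsSubterminal U) (s : A ⟶ U) :
    IsIso (CartesianMonoidalCategory.snd U A) := by
  refine ⟨lift s (𝟙 A), ?_, by simp⟩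
  apply CartesianMonoidalCategory.hom_ext
  · simpa using hU _ _
  · simp

lemma modalUnit_app_eq {U X : Cᵒᵖ ⥤ Type u} (c : Cᵒᵖ) (x : X.obj c) :
    (modalUnit U X).app c x
      = yonedaEquiv (MonoidalClosed.curry
          (CartesianMonoidalCategory.snd U (yoneda.obj c.unop) ≫ yonedaEquiv.symm x)) := by
  have h1 : MonoidalClosed.curry
      (CartesianMonoidalCategory.snd U (yoneda.obj c.unop) ≫ yonedaEquiv.symm x)
      = yonedaEquiv.symm x ≫ modalUnit U X := by
    rw [modalUnit]
    have := MonoidalClosed.curry_natural_left (A := U) (yonedaEquiv.symm x)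
      (CartesianMonoidalCategory.snd U X)
    rw [CartesianMonoidalCategory.whiskerLeft_snd] at this
    exact this
  rw [h1]
  have h2 := yonedaEquiv_comp (yonedaEquiv.symm x) (modalUnit U X)
  rw [Equiv.apply_symm_apply] at h2
  exact h2.symm

/-- If `U c` is inhabited, the component at `c` of the unit `X ⟶ X^U`
is a bijection. -/
lemma modalUnit_app_bijective {U X : Cᵒᵖ ⥤ Type u} (hU : IsSubterminal U) (c : Cᵒᵖ)
    (u₀ : U.obj c) : Function.Bijective ((modalUnit U X).app c) := by
  set y := yoneda.obj c.unop with hy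
  have s : y ⟶ U := yonedaEquiv.symm u₀
  have hiso : IsIso (CartesianMonoidalCategory.snd U y) := isIso_snd_of_hom hU s
  have h : ⇑((modalUnit U X).app c) = fun x => yonedaEquiv (MonoidalClosed.curry
      (CartesianMonoidalCategory.snd U y ≫ yonedaEquiv.symm x)) := funext (modalUnit_app_eq c)
  rw [h]
  refine yonedaEquiv.bijective.comp (Function.Bijective.comp ?_
    ((Function.Bijective.comp ?_ yonedaEquiv.symm.bijective)))
  · exact Function.bijective_iff_has_inverse.2
      ⟨MonoidalClosed.uncurry, MonoidalClosed.uncurry_curry, MonoidalClosed.curry_uncurry⟩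
  · exact Function.bijective_iff_has_inverse.2
      ⟨fun k => inv (CartesianMonoidalCategory.snd U y) ≫ k,
       fun k => by simp, fun k => by simp⟩

/-- Evaluating the defining pushout square of `Cl(Y)` at an object gives a pushout
square of types. -/
lemma eval_isPushout (U Y : Cᵒᵖ ⥤ Type u) (c : Cᵒᵖ) :
    IsPushout ((fst Y U).app c) ((snd Y U).app c)
      ((connUnit U Y).app c) ((pushout.inr (fst Y U) (snd Y U)).app c) :=
  (IsPushout.of_hasPushout (fst Y U) (snd Y U)).map ((evaluation Cᵒᵖ (Type u)).obj c)

/-- If `U c` is empty, the component at `c` of the unit `Y ⟶ Cl(Y)` is a bijection. -/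
lemma connUnit_app_bijective_of_isEmpty {U Y : Cᵒᵖ ⥤ Type u} (c : Cᵒᵖ)
    (h : IsEmpty (U.obj c)) : Function.Bijective ((connUnit U Y).app c) := by
  have hpo := eval_isPushout U Y c
  constructor
  · -- injective: `inl` admits a retraction
    have hr : (connUnit U Y).app c ≫ hpo.desc (𝟙 (Y.obj c)) (TypeCat.ofHom fun u => h.elim u)
        (by ext p; exact h.elim ((snd Y U).app c p)) = 𝟙 (Y.obj c) := hpo.inl_desc _ _ _
    exact Function.LeftInverse.injective (g := hpo.desc (𝟙 (Y.obj c)) (TypeCat.ofHom fun u => h.elim u)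
      (by ext p; exact h.elim ((snd Y U).app c p))) (fun a => types_congr_hom hr a)
  · -- surjective
    intro z
    obtain ⟨j, y, hy⟩ := Types.jointly_surjective _ hpo.isColimit z
    rcases j with _ | _ | _
    · exact ⟨(fst Y U).app c y, by
        rw [← hy, PushoutCocone.condition_zero]; rfl⟩
    · exact ⟨y, hy⟩
    · exact h.elim y

lemma subsingleton_of_subterminal {U : Cᵒᵖ ⥤ Type u} (hU : IsSubterminal U) (c : Cᵒᵖ)
    (u u' : U.obj c) : u = u' := by
  have h := hU (yonedaEquiv.symm u) (yonedaEquiv.symm u' : yoneda.obj c.unop ⟶ U)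
  simpa using congrArg yonedaEquiv h

/-- If `U c` is inhabited, `Cl(Y) c` is a singleton: every element equals the image of
`u₀` under the second coprojection. -/
lemma conn_app_eq {U Y : Cᵒᵖ ⥤ Type u} (hU : IsSubterminal U) {c : Cᵒᵖ} (u₀ : U.obj c)
    (z : ((connReflectionFunctor U).obj Y).obj c) :
    z = (pushout.inr (fst Y U) (snd Y U)).app c u₀ := by
  have hpo := eval_isPushout U Y c
  have key : ∀ y : Y.obj c, (connUnit U Y).app c y
      = (pushout.inr (fst Y U) (snd Y U)).app c u₀ := by
    intro y
    have hcond := types_congr_hom (NatTrans.congr_app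
      (pushout.condition (f := fst Y U) (g := snd Y U)) c)
      (show (Y ⊗ U).obj c from (y, u₀))
    exact hcond
  obtain ⟨j, y, hy⟩ := Types.jointly_surjective _ hpo.isColimit z
  rcases j with _ | _ | _
  · rw [← hy]
    rw [PushoutCocone.condition_zero]
    exact key ((fst Y U).app c y)
  · rw [← hy]; exact key y
  · rw [← hy]
    exact congrArg ((pushout.inr (fst Y U) (snd Y U)).app c)
      (subsingleton_of_subterminal hU c y u₀)

/-- Pointwise pullback criterion in presheaf categories. -/
lemma isPullback_of_evaluation {P X Y Z : Cᵒᵖ ⥤ Type u} {fst : P ⟶ X} {snd : P ⟶ Y}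
    {f : X ⟶ Z} {g : Y ⟶ Z} (w : fst ≫ f = snd ≫ g)
    (h : ∀ c, IsPullback (fst.app c) (snd.app c) (f.app c) (g.app c)) :
    IsPullback fst snd f g := by
  refine IsPullback.of_isLimit (c := PullbackCone.mk fst snd w) ?_
  refine evaluationJointlyReflectsLimits _ fun c => ?_
  exact (isLimitMapConePullbackConeEquiv ((evaluation Cᵒᵖ (Type u)).obj c) w).symm
    (h c).isLimit

end Aux

/-- the recollement / fracture square.  Let `C` be a small category
and `U` a subterminal presheaf on `C`.  For every presheaf `X`, the commuting square
with vertices `X`, `Cl(X)`, `O(X)`, `Cl(O(X))`, whose sides are the units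
`X ⟶ O(X)`, `X ⟶ Cl(X)`, `O(X) ⟶ Cl(O(X))` and `Cl` applied to the unit
`X ⟶ O(X)`, is a pullback square. -/
theorem fracture_square_isPullback (U : Cᵒᵖ ⥤ Type u) (hU : IsSubterminal U)
    (X : Cᵒᵖ ⥤ Type u) :
    IsPullback (modalUnit U X) (connUnit U X)
      (connUnit U (modalReflection U X))
      ((connReflectionFunctor U).map (modalUnit U X)) := by
  have w : modalUnit U X ≫ connUnit U (modalReflection U X)
      = connUnit U X ≫ (connReflectionFunctor U).map (modalUnit U X) := by
    exact (pushout.inl_desc _ _ _).symm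
  refine isPullback_of_evaluation w fun c => ?_
  by_cases hc : Nonempty (U.obj c)
  · obtain ⟨u₀⟩ := hc
    have h1 : IsIso ((modalUnit U X).app c) :=
      (isIso_iff_bijective _).2 (modalUnit_app_bijective hU c u₀)
    have h2 : IsIso (((connReflectionFunctor U).map (modalUnit U X)).app c) := by
      refine (isIso_iff_bijective _).2 ⟨fun a b _ => (conn_app_eq hU u₀ a).trans
        (conn_app_eq hU u₀ b).symm, fun z => ?_⟩
      refine ⟨(pushout.inr (CartesianMonoidalCategory.fst X U)
        (CartesianMonoidalCategory.snd X U)).app c u₀, ?_⟩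
      exact (conn_app_eq hU u₀ _).trans (conn_app_eq hU u₀ z).symm
    exact IsPullback.of_horiz_isIso ⟨NatTrans.congr_app w c⟩
  · have hempty : IsEmpty (U.obj c) := not_nonempty_iff.mp hc
    have h1 : IsIso ((connUnit U X).app c) :=
      (isIso_iff_bijective _).2 (connUnit_app_bijective_of_isEmpty c hempty)
    have h2 : IsIso ((connUnit U (modalReflection U X)).app c) :=
      (isIso_iff_bijective _).2 (connUnit_app_bijective_of_isEmpty c hempty)
    exact IsPullback.of_vert_isIso ⟨NatTrans.congr_app w c⟩
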